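/- For all c, k ∈ ℕ, every graph that is c-quasi-isometric to a graph with treewidth at most k has a (k+1, 3c²)-centred tree-decomposition. -/

import Mathlib

open SimpleGraph
open scoped ENNReal NNReal

/-- `φ` is a `q`-quasi-isometry from `G` to `H`:
`q⁻¹ · dist_G(u,v) − q ≤ dist_H(φ u, φ v) ≤ q · dist_G(u,v) + q` (distances taken in `ℝ≥0∞`,
where unreachable pairs have distance `∞`), and every vertex of `H` is within distance `q`
of the image of `φ`. -/
def IsQuasiIsometry {V W : Type} (q : ℕ) (G : SimpleGraph V) (H : SimpleGraph W)
    (φ : V → W) : Prop :=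
  (∀ u v : V, (G.edist u v : ℝ≥0∞) / q - q ≤ (H.edist (φ u) (φ v) : ℝ≥0∞)) ∧
  (∀ u v : V, (H.edist (φ u) (φ v) : ℝ≥0∞) ≤ q * (G.edist u v : ℝ≥0∞) + q) ∧
  (∀ x : W, ∃ v : V, (H.edist x (φ v) : ℝ≥0∞) ≤ q)

/-- `G` is `q`-quasi-isometric to `H`. -/
def QuasiIsometric {V W : Type} (q : ℕ) (G : SimpleGraph V) (H : SimpleGraph W) : Prop :=
  ∃ φ : V → W, IsQuasiIsometry q G H φ

/-- `(T, β)` is a `T`-decomposition of `G`: every edge of `G` has both ends in some bag, and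
for every vertex `v` of `G` the set of nodes whose bag contains `v` induces a non-empty
connected subgraph of `T`. -/
def IsTreeDecomp {X V : Type} (T : SimpleGraph X) (G : SimpleGraph V) (β : X → Set V) : Prop :=
  (∀ ⦃u v : V⦄, G.Adj u v → ∃ x : X, u ∈ β x ∧ v ∈ β x) ∧
  (∀ v : V, (T.induce {x : X | v ∈ β x}).Connected)

/-- `(L, β)` is an `L`-decomposition of `G` over the line (linearly ordered set) `L`:
every edge of `G` has both ends in some bag, and for every vertex `v` of `G` the set of
points of `L` whose bag contains `v` is a non-empty interval of `L`. -/
def IsLineDecomp {L V : Type} [LinearOrder L] (G : SimpleGraph V) (β : L → Set V) : Prop :=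
  (∀ ⦃u v : V⦄, G.Adj u v → ∃ x : L, u ∈ β x ∧ v ∈ β x) ∧
  (∀ v : V, {x : L | v ∈ β x}.Nonempty ∧ {x : L | v ∈ β x}.OrdConnected)

/-- `S` is `(k,d)`-centred in `G`: `S` can be partitioned into at most `k` sets, each of
weak diameter at most `d` in `G`. -/
def Centred {V : Type} (G : SimpleGraph V) (k d : ℕ) (S : Set V) : Prop :=
  ∃ P : Fin k → Set V,
    (⋃ i, P i) = S ∧
    (∀ i j : Fin k, i ≠ j → Disjoint (P i) (P j)) ∧
    (∀ i : Fin k, ∀ u ∈ P i, ∀ v ∈ P i, G.edist u v ≤ (d : ℕ∞))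

/-- The independence number of the subgraph of `G` induced by `S` is at most `k`. -/
def IndepAtMost {V : Type} (G : SimpleGraph V) (S : Set V) (k : ℕ) : Prop :=
  ∀ I ⊆ S, (∀ u ∈ I, ∀ v ∈ I, u ≠ v → ¬ G.Adj u v) → I.encard ≤ (k : ℕ∞)

/-- The domination number of the subgraph of `G` induced by `S` is at most `k`. -/
def DomAtMost {V : Type} (G : SimpleGraph V) (S : Set V) (k : ℕ) : Prop :=
  ∃ D ⊆ S, D.encard ≤ (k : ℕ∞) ∧ ∀ v ∈ S, v ∉ D → ∃ u ∈ D, G.Adj v u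

/-- `P` is a partition of the graph `G`: a collection of non-empty vertex sets, each inducing
a connected subgraph of `G`, such that every vertex lies in exactly one part. -/
def IsGraphPartition {V : Type} (G : SimpleGraph V) (P : Set (Set V)) : Prop :=
  (∀ A ∈ P, A.Nonempty) ∧
  (∀ A ∈ P, (G.induce A).Connected) ∧
  (∀ v : V, ∃! A, A ∈ P ∧ v ∈ A)

/-- The quotient graph `G/P`: vertices are the parts of `P`, and distinct parts are adjacent
iff some vertex of one is adjacent in `G` to some vertex of the other. -/
def quotientGraph {V : Type} (G : SimpleGraph V) (P : Set (Set V)) : SimpleGraph P where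
  Adj A B := A ≠ B ∧ ∃ a ∈ (A : Set V), ∃ b ∈ (B : Set V), G.Adj a b
  symm := by
    constructor
    rintro A B ⟨hne, a, ha, b, hb, hab⟩
    exact ⟨hne.symm, b, hb, a, ha, hab.symm⟩
  loopless := by constructor; rintro A ⟨hne, -⟩; exact hne rfl

/-- `sim_G(A) ≤ k`: every induced matching of `G` between `A` and its complement has at
most `k` edges. -/
def SimAtMost {V : Type} (G : SimpleGraph V) (A : Set V) (k : ℕ) : Prop :=
  ∀ (m : ℕ) (a b : Fin m → V),
    Function.Injective a → Function.Injective b →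
    (∀ i, a i ∈ A) → (∀ i, b i ∉ A) →
    (∀ i, G.Adj (a i) (b i)) →
    (∀ i j : Fin m, i ≠ j →
      ¬ G.Adj (a i) (a j) ∧ ¬ G.Adj (b i) (b j) ∧ ¬ G.Adj (a i) (b j)) →
    m ≤ k

/-- `G` has sim-width at most `k`: there is a branch-decomposition `(T, L)` — a subcubic
tree `T` together with a map `L` from the vertices of `G` to the leaves of `T` — such that,
for every edge `ab` of `T`, the side of the associated vertex partition consisting of the
vertices mapped to the component of `T − ab` containing `a` satisfies `sim_G ≤ k`. -/
def SimWidthAtMost {V : Type} (G : SimpleGraph V) (k : ℕ) : Prop :=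
  ∃ (X : Type) (T : SimpleGraph X) (L : V → X),
    T.IsTree ∧
    (∀ x : X, (T.neighborSet x).encard ≤ 3) ∧
    (∀ v : V, (T.neighborSet (L v)).encard = 1) ∧
    (∀ a b : X, T.Adj a b →
      SimAtMost G {v : V | (T.deleteEdges {s(a, b)}).Reachable (L v) a} k)

section AuxLemmas

def inclHom {X : Type} (T : SimpleGraph X) {A B : Set X} (h : A ⊆ B) :
    T.induce A →g T.induce B where
  toFun := Set.inclusion h
  map_rel' := fun hab => hab

lemma reachable_induce_mono {X : Type} (T : SimpleGraph X) {A B : Set X} (h : A ⊆ B)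
    {x y : X} (hx : x ∈ A) (hy : y ∈ A)
    (hr : (T.induce A).Reachable ⟨x, hx⟩ ⟨y, hy⟩) :
    (T.induce B).Reachable ⟨x, h hx⟩ ⟨y, h hy⟩ :=
  hr.map (inclHom T h)

lemma edist_split {W : Type} (H : SimpleGraph W) :
    ∀ (m n : ℕ) (a b : W), H.edist a b ≤ (m : ℕ∞) + n →
      ∃ w : W, H.edist a w ≤ m ∧ H.edist w b ≤ n := by
  intro m
  induction m with
  | zero =>
    intro n a b h
    exact ⟨a, by simp, by simpa using h⟩
  | succ m ih =>
    intro n a b h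
    have hfin : H.edist a b ≠ ⊤ := by
      intro ht
      rw [ht] at h
      have : ((m + 1 : ℕ) : ℕ∞) + (n : ℕ∞) < ⊤ := by
        exact_mod_cast ENat.coe_lt_top (m + 1 + n)
      exact (this.trans_le (by exact_mod_cast h)).false
    obtain ⟨p, hp⟩ := SimpleGraph.exists_walk_of_edist_ne_top hfin
    have hple : p.length ≤ (m + 1) + n := by
      have : (p.length : ℕ∞) ≤ (((m + 1) + n : ℕ) : ℕ∞) := by
        rw [hp]; push_cast; exact_mod_cast h
      exact_mod_cast this
    cases p with
    | nil => exact ⟨a, by simp, by simp⟩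
    | cons hadj q =>
      rename_i a'
      have hqle : q.length ≤ m + n := by
        have := hple; simp [SimpleGraph.Walk.length_cons] at this; omega
      have hq : H.edist a' b ≤ (m : ℕ∞) + n := by
        calc H.edist a' b ≤ (q.length : ℕ∞) := SimpleGraph.edist_le q
        _ ≤ ((m + n : ℕ) : ℕ∞) := by exact_mod_cast hqle
        _ = (m : ℕ∞) + n := by push_cast; ring
      obtain ⟨w, h1, h2⟩ := ih n a' b hq
      refine ⟨w, ?_, h2⟩
      calc H.edist a w ≤ H.edist a a' + H.edist a' w := SimpleGraph.edist_triangle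
      _ ≤ 1 + (m : ℕ∞) := by
          exact add_le_add (le_of_eq (SimpleGraph.edist_eq_one_iff_adj.mpr hadj)) h1
      _ = ((m + 1 : ℕ) : ℕ∞) := by push_cast; ring

lemma key_bound (c : ℕ) (x : ℕ∞)
    (h : (x : ℝ≥0∞) / (c : ℝ≥0∞) - (c : ℝ≥0∞) ≤ ((c : ℝ≥0∞) + c)) :
    x ≤ ((3 * c ^ 2 : ℕ) : ℕ∞) := by
  rcases Nat.eq_zero_or_pos c with hc | hc
  · subst hc
    simp only [Nat.cast_zero, tsub_zero, add_zero] at h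
    by_cases hx : (x : ℝ≥0∞) = 0
    · have : x = 0 := by exact_mod_cast hx
      simp [this]
    · exfalso
      rw [ENNReal.div_zero hx] at h
      simp at h
  · have hc0 : (c : ℝ≥0∞) ≠ 0 := by exact_mod_cast Nat.pos_iff_ne_zero.mp hc
    have hct : (c : ℝ≥0∞) ≠ ⊤ := by simp
    have h1 : (x : ℝ≥0∞) / c ≤ (c : ℝ≥0∞) + c + c := tsub_le_iff_right.mp h
    have h2 : (x : ℝ≥0∞) ≤ ((c : ℝ≥0∞) + c + c) * c := (ENNReal.div_le_iff hc0 hct).mp h1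
    have h3 : ((c : ℝ≥0∞) + c + c) * c = (((3 * c ^ 2 : ℕ) : ℕ∞) : ℝ≥0∞) := by
      rw [ENat.toENNReal_coe]; push_cast; ring
    rw [h3] at h2
    exact ENat.toENNReal_le.mp h2

end AuxLemmas

/-- For all `c, k ∈ ℕ`, every graph that is `c`-quasi-isometric to a graph
with treewidth at most `k` has a `(k+1, 3c²)`-centred tree-decomposition. -/
theorem centredTreeDecomp_of_quasiIsometric_boundedTreewidth
    (c k : ℕ) (V W : Type) [Finite V] [Finite W] (G : SimpleGraph V) (H : SimpleGraph W)
    (hH : ∃ (X : Type) (T : SimpleGraph X) (β : X → Set W),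
      T.IsTree ∧ IsTreeDecomp T H β ∧ ∀ x : X, (β x).encard ≤ ((k + 1 : ℕ) : ℕ∞))
    (hQI : QuasiIsometric c G H) :
    ∃ (X : Type) (T : SimpleGraph X) (β : X → Set V),
      T.IsTree ∧ IsTreeDecomp T G β ∧ ∀ x : X, Centred G (k + 1) (3 * c ^ 2) (β x) := by
    classical
  obtain ⟨φ, hlow, hup, -⟩ := hQI
  obtain ⟨X, T, β, hT, ⟨hedge, hconn⟩, hsize⟩ := hH
  -- the new bags
  set γ : X → Set V := fun x => {v : V | ∃ w ∈ β x, H.edist (φ v) w ≤ (c : ℕ∞)} with hγ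
  refine ⟨X, T, γ, hT, ⟨?_, ?_⟩, ?_⟩
  · -- edges covered
    intro u v huv
    have hG1 : G.edist u v = 1 := SimpleGraph.edist_eq_one_iff_adj.mpr huv
    have hup' := hup u v
    rw [hG1] at hup'
    have hHc : H.edist (φ u) (φ v) ≤ (c : ℕ∞) + c := by
      have : (H.edist (φ u) (φ v) : ℝ≥0∞) ≤ (((c : ℕ∞) + c : ℕ∞) : ℝ≥0∞) := by
        refine hup'.trans ?_
        rw [ENat.toENNReal_add]
        simp [ENat.toENNReal_coe]
      exact ENat.toENNReal_le.mp this
    obtain ⟨w, hw1, hw2⟩ := edist_split H c c (φ u) (φ v) hHc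
    obtain ⟨⟨x, hx⟩⟩ := (hconn w).nonempty
    exact ⟨x, ⟨w, hx, hw1⟩, ⟨w, hx, by rwa [SimpleGraph.edist_comm]⟩⟩
  · -- connectivity of the trace subtrees
    intro v
    set S : Set X := {x : X | v ∈ γ x} with hS
    obtain ⟨⟨x₀, hx₀⟩⟩ := (hconn (φ v)).nonempty
    have hx₀S : x₀ ∈ S := ⟨φ v, hx₀, by simp⟩
    -- subtrees of vertices of H within distance c of φ v are inside S
    have hsub : ∀ w : W, H.edist (φ v) w ≤ (c : ℕ∞) → {x : X | w ∈ β x} ⊆ S :=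
      fun w hw x hx => ⟨w, hx, hw⟩
    have key : ∀ n : ℕ, ∀ w : W, H.edist (φ v) w ≤ (n : ℕ∞) → n ≤ c →
        ∀ x, w ∈ β x → ∀ hxS : x ∈ S,
        (T.induce S).Reachable ⟨x, hxS⟩ ⟨x₀, hx₀S⟩ := by
      intro n
      induction n with
      | zero =>
        intro w hw _ x hx hxS
        have hwv : w = φ v := by
          have : H.edist (φ v) w = 0 := le_antisymm (by simpa using hw) zero_le
          exact (SimpleGraph.edist_eq_zero_iff.mp this).symm
        subst hwv
        have hA : {y : X | φ v ∈ β y} ⊆ S := hsub (φ v) (by simp)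
        have hr := (hconn (φ v)).preconnected ⟨x, hx⟩ ⟨x₀, hx₀⟩
        exact reachable_induce_mono T hA hx hx₀ hr
      | succ n ih =>
        intro w hw hn x hx hxS
        by_cases hle : H.edist (φ v) w ≤ (n : ℕ∞)
        · exact ih w hle (Nat.le_of_succ_le hn) x hx hxS
        · have hfin : H.edist (φ v) w ≠ ⊤ := by
            intro ht; rw [ht] at hw
            exact ((ENat.coe_lt_top (n+1)).trans_le (by exact_mod_cast hw)).false
          obtain ⟨p, hp⟩ := SimpleGraph.exists_walk_of_edist_ne_top hfin
          have hplen : p.length ≤ n + 1 := by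
            have : (p.length : ℕ∞) ≤ ((n + 1 : ℕ) : ℕ∞) := by
              rw [hp]; exact_mod_cast hw
            exact_mod_cast this
          cases hq : p.reverse with
          | nil =>
            exact absurd (by simp : H.edist (φ v) (φ v) ≤ (n : ℕ∞)) hle
          | cons hadj q =>
            rename_i w'
            -- hadj : H.Adj w w', q : Walk w' (φ v)
            have hqlen : q.length ≤ n := by
              have := congrArg SimpleGraph.Walk.length hq
              rw [SimpleGraph.Walk.length_reverse] at this
              simp [SimpleGraph.Walk.length_cons] at this
              omega
            have hw' : H.edist (φ v) w' ≤ (n : ℕ∞) := by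
              rw [SimpleGraph.edist_comm]
              calc H.edist w' (φ v) ≤ (q.length : ℕ∞) := SimpleGraph.edist_le q
              _ ≤ (n : ℕ∞) := by exact_mod_cast hqlen
            obtain ⟨y, hwy, hw'y⟩ := hedge hadj
            -- hwy : w ∈ β y? careful with order
            have hwc : H.edist (φ v) w ≤ (c : ℕ∞) := hw.trans (by exact_mod_cast hn)
            have hyS : y ∈ S := hsub w hwc hwy
            have hr1 : (T.induce S).Reachable ⟨x, hxS⟩ ⟨y, hyS⟩ := by
              have := (hconn w).preconnected ⟨x, hx⟩ ⟨y, hwy⟩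
              exact reachable_induce_mono T (hsub w hwc) hx hwy this
            exact hr1.trans (ih w' hw' (Nat.le_of_succ_le hn) y hw'y hyS)
    haveI : Nonempty ↥S := ⟨⟨x₀, hx₀S⟩⟩
    refine SimpleGraph.Connected.mk ?_
    rintro ⟨a, haS⟩ ⟨b, hbS⟩
    obtain ⟨wa, hwa, hwac⟩ := haS
    obtain ⟨wb, hwb, hwbc⟩ := hbS
    have ra := key c wa hwac le_rfl a hwa ⟨wa, hwa, hwac⟩
    have rb := key c wb hwbc le_rfl b hwb ⟨wb, hwb, hwbc⟩
    exact ra.trans rb.symm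
  · -- each bag is (k+1, 3c²)-centred
    intro x
    have hBfin : (β x).Finite := Set.toFinite _
    haveI : Fintype ↥(β x) := hBfin.fintype
    have hcard : Fintype.card ↥(β x) ≤ k + 1 := by
      have h1 := hsize x
      rw [Set.encard_le_coe_iff_finite_ncard_le] at h1
      have h2 := h1.2
      rwa [Set.ncard_eq_toFinset_card', Set.toFinset_card] at h2
    obtain ⟨e⟩ : Nonempty (↥(β x) ↪ Fin (k + 1)) :=
      Function.Embedding.nonempty_of_card_le (by simpa using hcard)
    refine ⟨fun i => {v : V | ∃ hv : v ∈ γ x, e ⟨hv.choose, hv.choose_spec.1⟩ = i}, ?_, ?_, ?_⟩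
    · ext v
      simp only [Set.mem_iUnion, Set.mem_setOf_eq]
      constructor
      · rintro ⟨i, hv, -⟩; exact hv
      · intro hv; exact ⟨e ⟨hv.choose, hv.choose_spec.1⟩, hv, rfl⟩
    · intro i j hij
      rw [Set.disjoint_left]
      rintro v ⟨hv1, he1⟩ ⟨hv2, he2⟩
      rw [Subsingleton.elim hv2 hv1] at he2
      exact hij (he1.symm.trans he2 ▸ rfl)
    · rintro i u ⟨hu1, heu⟩ v ⟨hv1, hev⟩
      have heq : (⟨hu1.choose, hu1.choose_spec.1⟩ : ↥(β x)) = ⟨hv1.choose, hv1.choose_spec.1⟩ :=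
        e.injective (heu.trans hev.symm)
      have hww : hu1.choose = hv1.choose := congrArg Subtype.val heq
      have hHd : H.edist (φ u) (φ v) ≤ (c : ℕ∞) + c := by
        calc H.edist (φ u) (φ v)
            ≤ H.edist (φ u) hu1.choose + H.edist hu1.choose (φ v) :=
              SimpleGraph.edist_triangle
        _ ≤ (c : ℕ∞) + c := by
            refine add_le_add hu1.choose_spec.2 ?_
            rw [SimpleGraph.edist_comm, hww]
            exact hv1.choose_spec.2
      have hlow' := hlow u v
      have hHd' : (H.edist (φ u) (φ v) : ℝ≥0∞) ≤ (c : ℝ≥0∞) + c := by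
        have := ENat.toENNReal_le.mpr hHd
        rwa [ENat.toENNReal_add, ENat.toENNReal_coe] at this
      have := key_bound c (G.edist u v) (hlow'.trans hHd')
      exact_mod_cast this
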